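/- Let $x_0,\ldots,x_t$ and $\beta$ be integers, and define $x_\nu := \beta + \min_{j_1+j_2=\nu-1,\ j_1,j_2\ge 0}(x_{j_1}+x_{j_2})$ for all $\nu \ge t+1$. Let $p$ with $0\le p\le t$ minimize $(x_j+\beta)/(j+1)$ over $0\le j\le t$. Then for all integers $k\ge 1$ we have $x_{p+k(p+1)} - x_p \ge k(x_p+\beta)$. -/

import Mathlib

theorem stmt1 (t : ℕ) (β : ℤ) (x : ℕ → ℤ)
    (hrec : ∀ ν : ℕ, ∀ _hν : t + 1 ≤ ν,
      x ν = β + (Finset.range ν).inf' (Finset.nonempty_range_iff.mpr (by omega))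
        (fun j => x j + x (ν - 1 - j)))
    (p : ℕ) (hp : p ≤ t)
    (hmin : ∀ j : ℕ, j ≤ t → ((x p : ℚ) + β) / (p + 1) ≤ ((x j : ℚ) + β) / (j + 1)) :
    ∀ k : ℕ, 1 ≤ k → (k : ℤ) * (x p + β) ≤ x (p + k * (p + 1)) - x p := by
  have key : ∀ ν : ℕ, ((ν : ℤ) + 1) * (x p + β) ≤ ((p : ℤ) + 1) * (x ν + β) := by
    intro ν
    induction ν using Nat.strong_induction_on with
    | _ ν ih =>
      by_cases hν : ν ≤ t
      · have hq := hmin ν hν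
        rw [div_le_div_iff₀ (by positivity) (by positivity)] at hq
        have hq' : ((ν : ℚ) + 1) * (x p + β) ≤ ((p : ℚ) + 1) * (x ν + β) := by linarith
        exact_mod_cast hq'
      · have hν' : t + 1 ≤ ν := by omega
        rw [hrec ν hν']
        obtain ⟨j, hj, hje⟩ := Finset.exists_mem_eq_inf'
          (Finset.nonempty_range_iff.mpr (by omega : ν ≠ 0))
          (fun j => x j + x (ν - 1 - j))
        rw [hje]
        have hjν : j < ν := Finset.mem_range.mp hj
        have h1 := ih j hjν
        have h2 := ih (ν - 1 - j) (by omega)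
        have hc : ((ν - 1 - j : ℕ) : ℤ) = (ν : ℤ) - 1 - j := by
          have : ((ν : ℤ)) = ((ν : ℕ) : ℤ) := rfl
          push_cast [Nat.cast_sub (by omega : 1 + j ≤ ν)]
          omega
        rw [hc] at h2
        linarith
  intro k hk
  have h := key (p + k * (p + 1))
  have hc : ((p + k * (p + 1) : ℕ) : ℤ) = (p : ℤ) + k * (p + 1) := by push_cast; ring
  rw [hc] at h
  have hp1 : (0 : ℤ) < (p : ℤ) + 1 := by positivity
  have h2 : ((p : ℤ) + 1) * (((k : ℤ) + 1) * (x p + β)) ≤ ((p : ℤ) + 1) * (x (p + k * (p + 1)) + β) := by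
    nlinarith
  have := (mul_le_mul_iff_right₀ hp1).mp h2
  linarith
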